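/- arXiv:1205.6006 — 2 statements merged into one kernel-verified Lean document; each statement's English description precedes it below -/
import Mathlib

section
/- The map Ξ is a bijection from 𝒯(∞) onto the set of all functions from the six positive roots {α_1, α_1+α_2, 2α_1+α_2, 3α_1+α_2, 3α_1+2α_2, α_2} of G_2 to the nonnegative integers. Moreover, for every T ∈ 𝒯(∞), seg(T) equals the number of positive roots α with Ξ(T)(α) ≠ 0. -/
/-- The marginally large tableaux `𝒯(∞)` of type `G_2`, each determined by its
segment data `(ℓ_{1,2}, ℓ_{1,3}, ℓ_{1,0}, ℓ_{1,3̄}, ℓ_{1,2̄}, ℓ_{1,1̄}, ℓ_{2,3})`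
with `ℓ_{1,0} ∈ {0,1}`. -/
structure TabG where
  l12 : ℕ
  l13 : ℕ
  l10 : ℕ
  l13b : ℕ
  l12b : ℕ
  l11b : ℕ
  l23 : ℕ
  l10_le : l10 ≤ 1

/-- The set of positive roots of `G_2`
(`α_1, α_1+α_2, 2α_1+α_2, 3α_1+α_2, 3α_1+2α_2, α_2`), in simple-root
coordinates. -/
def posRootsG : Finset (Fin 2 → ℕ) :=
  {![1, 0], ![1, 1], ![2, 1], ![3, 1], ![3, 2], ![0, 1]}

/-- `Ξ(T)`, extended by zero to all vectors: `ℓ_{1,2}` at `α_1`, `ℓ_{1,3}` at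
`α_1+α_2`, `2ℓ_{1,1̄} + ℓ_{1,0}` at `2α_1+α_2`, `ℓ_{1,3̄}` at `3α_1+α_2`,
`ℓ_{1,2̄}` at `3α_1+2α_2`, and `ℓ_{2,3}` at `α_2`. -/
def XiG (T : TabG) (v : Fin 2 → ℕ) : ℕ :=
  (if v = ![1, 0] then T.l12 else 0) +
    (if v = ![1, 1] then T.l13 else 0) +
    (if v = ![2, 1] then 2 * T.l11b + T.l10 else 0) +
    (if v = ![3, 1] then T.l13b else 0) +
    (if v = ![3, 2] then T.l12b else 0) +
    (if v = ![0, 1] then T.l23 else 0)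

/-- `seg′(T)`: the number of nonzero values among the seven segment data. -/
def segG' (T : TabG) : ℕ :=
  (if T.l12 ≠ 0 then 1 else 0) + (if T.l13 ≠ 0 then 1 else 0) +
    (if T.l10 ≠ 0 then 1 else 0) + (if T.l13b ≠ 0 then 1 else 0) +
    (if T.l12b ≠ 0 then 1 else 0) + (if T.l11b ≠ 0 then 1 else 0) +
    (if T.l23 ≠ 0 then 1 else 0)

/-- `seg(T) = seg′(T) - 1` if the first row contains both a `0`-segment and a
`1̄`-segment, and `seg(T) = seg′(T)` otherwise. -/
def segG (T : TabG) : ℕ :=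
  segG' T - (if T.l10 ≠ 0 ∧ T.l11b ≠ 0 then 1 else 0)

/-- `-wt(T) = Σ_α Ξ(T)(α)·α`, in simple-root coordinates. -/
def negwtG (T : TabG) : Fin 2 → ℕ :=
  ∑ v ∈ posRootsG, XiG T v • v

lemma XiG_eval (T : TabG) :
    XiG T ![1, 0] = T.l12 ∧ XiG T ![1, 1] = T.l13 ∧
    XiG T ![2, 1] = 2 * T.l11b + T.l10 ∧ XiG T ![3, 1] = T.l13b ∧
    XiG T ![3, 2] = T.l12b ∧ XiG T ![0, 1] = T.l23 := by
  refine ⟨?_, ?_, ?_, ?_, ?_, ?_⟩ <;>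
    simp [XiG, funext_iff, Fin.forall_fin_two]

def invG (f : {v // v ∈ posRootsG} → ℕ) : TabG where
  l12 := f ⟨![1, 0], by simp [posRootsG]⟩
  l13 := f ⟨![1, 1], by simp [posRootsG]⟩
  l10 := f ⟨![2, 1], by simp [posRootsG]⟩ % 2
  l13b := f ⟨![3, 1], by simp [posRootsG]⟩
  l12b := f ⟨![3, 2], by simp [posRootsG]⟩
  l11b := f ⟨![2, 1], by simp [posRootsG]⟩ / 2
  l23 := f ⟨![0, 1], by simp [posRootsG]⟩
  l10_le := Nat.lt_succ_iff.mp (Nat.mod_lt _ (by norm_num))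

set_option maxHeartbeats 1000000 in
/-- `Ξ` is a bijection from `𝒯(∞)` of type `G_2` onto the set of
all functions from the six positive roots of `G_2` to `ℕ`; moreover `seg(T)`
equals the number of positive roots where `Ξ(T)` is nonzero. -/
theorem stmt9 :
    Function.Bijective
      (fun (T : TabG) (α : {v // v ∈ posRootsG}) => XiG T α.1) ∧
    (∀ T : TabG,
      segG T = (posRootsG.filter fun v => XiG T v ≠ 0).card) := by
  constructor
  · apply Function.bijective_iff_has_inverse.mpr
    refine ⟨invG, ?_, ?_⟩
    · intro T
      obtain ⟨h1, h2, h3, h4, h5, h6⟩ := XiG_eval T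
      have hle := T.l10_le
      simp only [invG, h1, h2, h3, h4, h5, h6]
      cases T
      simp only [TabG.mk.injEq]
      refine ⟨?_, ?_, ?_, ?_, ?_, ?_, ?_⟩ <;> first | trivial | omega
    · intro f
      funext α
      obtain ⟨v, hv⟩ := α
      show XiG (invG f) v = f ⟨v, hv⟩
      obtain ⟨h1, h2, h3, h4, h5, h6⟩ := XiG_eval (invG f)
      have hv' := hv
      simp only [posRootsG, Finset.mem_insert, Finset.mem_singleton] at hv'
      rcases hv' with rfl | rfl | rfl | rfl | rfl | rfl
      · rw [h1]; rfl
      · rw [h2]; rfl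
      · rw [h3]; exact Nat.div_add_mod _ 2
      · rw [h4]; rfl
      · rw [h5]; rfl
      · rw [h6]; rfl
  · intro T
    obtain ⟨h1, h2, h3, h4, h5, h6⟩ := XiG_eval T
    have hle := T.l10_le
    have hcard : (posRootsG.filter fun v => XiG T v ≠ 0).card =
        ∑ v ∈ posRootsG, if XiG T v ≠ 0 then 1 else 0 := by
      rw [Finset.card_filter]
    rw [hcard]
    have hset : posRootsG = insert ![1, 0] (insert ![1, 1] (insert ![2, 1]
        (insert ![3, 1] (insert ![3, 2] {![0, 1]})))) := rfl
    rw [hset]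
    rw [Finset.sum_insert (by decide),
      Finset.sum_insert (by decide),
      Finset.sum_insert (by decide),
      Finset.sum_insert (by decide),
      Finset.sum_insert (by decide), Finset.sum_singleton]
    rw [h1, h2, h3, h4, h5, h6]
    simp only [segG, segG']
    split_ifs <;> omega
end

section
/- For every μ in the positive root lattice of A_r, Lusztig's q-analogue of the Kostant partition function satisfies 𝒫(μ;q) = Σ_{T ∈ 𝒯(∞), −wt(T) = μ} q^{|T|} as polynomials in q (both sums are finite). -/
/-- Marginally large semistandard Young tableaux of type `A_r`, on the alphabet
`{1 < 2 < ⋯ < r+1}`: exactly `r` rows (given as lists of entries), rows weakly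
increasing, columns strictly increasing, first column `1, 2, …, r`, and the
number of `i`-entries in row `i` exceeds the number of boxes in row `i+1` by
exactly one. -/
structure TabA (r : ℕ) where
  row : Fin r → List ℕ
  entry_mem : ∀ i : Fin r, ∀ e ∈ row i, 1 ≤ e ∧ e ≤ r + 1
  row_weak : ∀ i : Fin r, (row i).Chain' (· ≤ ·)
  first_col : ∀ i : Fin r, (row i).head? = some (i.1 + 1)
  col_le : ∀ i : Fin r, ∀ h : i.1 + 1 < r,
    (row ⟨i.1 + 1, h⟩).length ≤ (row i).length
  col_strict : ∀ i : Fin r, ∀ h : i.1 + 1 < r, ∀ j < (row ⟨i.1 + 1, h⟩).length,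
    (row i).getD j 0 < (row ⟨i.1 + 1, h⟩).getD j 0
  marg_large : ∀ i : Fin r, (row i).count (i.1 + 1) =
    (if h : i.1 + 1 < r then (row ⟨i.1 + 1, h⟩).length else 0) + 1

/-- `ℓ_{i,k}(T)`: the number of `k`-entries in row `i` (rows of `T` are indexed by
`Fin r`, row `i : Fin r` having label `i+1`). -/
def ellA (r : ℕ) (T : TabA r) (i : Fin r) (k : ℕ) : ℕ := (T.row i).count k

/-- `seg(T)`: the number of pairs `(i,k)` with `1 ≤ i < k ≤ r+1` and `ℓ_{i,k}(T) > 0`. -/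
def segA (r : ℕ) (T : TabA r) : ℕ :=
  ∑ i : Fin r, ((Finset.Icc (i.1 + 2) (r + 1)).filter fun k => ellA r T i k ≠ 0).card

/-- The positive root `β_{i,k} = α_i + ⋯ + α_k` of `A_r`, as a vector of
coordinates in the simple roots. -/
def betaA (r : ℕ) (i k : ℕ) : Fin r → ℕ :=
  fun j => if i ≤ j.1 + 1 ∧ j.1 + 1 ≤ k then 1 else 0

/-- The set of positive roots `{β_{i,k} : 1 ≤ i ≤ k ≤ r}` of `A_r`. -/
def posRootsA (r : ℕ) : Finset (Fin r → ℕ) :=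
  ((Finset.Icc 1 r ×ˢ Finset.Icc 1 r).filter fun p => p.1 ≤ p.2).image
    fun p => betaA r p.1 p.2

/-- `Ξ(T)`, extended by zero to all vectors: `Ξ(T)(β_{i,k}) = ℓ_{i,k+1}(T)`. -/
def XiA (r : ℕ) (T : TabA r) (v : Fin r → ℕ) : ℕ :=
  ∑ i : Fin r, ∑ k ∈ Finset.Icc (i.1 + 1) r,
    if v = betaA r (i.1 + 1) k then ellA r T i (k + 1) else 0

/-- `-wt(T) = Σ_{1≤i<k≤r+1} ℓ_{i,k}(T)·(α_i + ⋯ + α_{k-1})`, in simple-root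
coordinates. -/
def negwtA (r : ℕ) (T : TabA r) : Fin r → ℕ :=
  ∑ i : Fin r, ∑ k ∈ Finset.Icc (i.1 + 2) (r + 1),
    ellA r T i k • betaA r (i.1 + 1) (k - 1)

/-- `wt(T)` as an integer vector in simple-root coordinates. -/
def wtA (r : ℕ) (T : TabA r) : Fin r → ℤ :=
  fun j => -(negwtA r T j : ℤ)

/-- `|T|`: the number of boxes in the reduced form of `T`. -/
def sizeA (r : ℕ) (T : TabA r) : ℕ :=
  ∑ i : Fin r, ∑ k ∈ Finset.Icc (i.1 + 2) (r + 1), ellA r T i k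

namespace S11

def Sf (r : ℕ) (f : ℕ → ℕ → ℕ) (i : ℕ) : ℕ := ∑ k ∈ Finset.Icc (i+2) (r+1), f i k

def lenf (r : ℕ) (f : ℕ → ℕ → ℕ) (i : ℕ) : ℕ := ∑ j ∈ Finset.Ico i r, (Sf r f j + 1)

lemma lenf_of_ge (r : ℕ) (f : ℕ → ℕ → ℕ) {i : ℕ} (h : r ≤ i) : lenf r f i = 0 := by
  unfold lenf
  rw [Finset.Ico_eq_empty (by omega), Finset.sum_empty]

lemma lenf_succ (r : ℕ) (f : ℕ → ℕ → ℕ) {i : ℕ} (h : i < r) :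
    lenf r f i = Sf r f i + 1 + lenf r f (i+1) := by
  unfold lenf
  rw [Finset.sum_eq_sum_Ico_succ_bot h]

def tailf (r : ℕ) (f : ℕ → ℕ → ℕ) (i : ℕ) : List ℕ :=
  ((List.range' (i+2) (r - i)).map (fun k => List.replicate (f i k) k)).flatten

def rowf (r : ℕ) (f : ℕ → ℕ → ℕ) (i : ℕ) : List ℕ :=
  List.replicate (lenf r f (i+1) + 1) (i+1) ++ tailf r f i

lemma count_blocks (g : ℕ → ℕ) (v : ℕ) : ∀ (n s : ℕ),
    (((List.range' s n).map (fun k => List.replicate (g k) k)).flatten).count v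
      = if s ≤ v ∧ v < s + n then g v else 0 := by
  intro n
  induction n with
  | zero => intro s; simp only [List.range'_zero, List.map_nil, List.flatten_nil,
      List.count_nil]; rw [if_neg (by omega)]
  | succ n ih =>
    intro s
    rw [List.range'_succ]
    simp only [List.map_cons, List.flatten_cons, List.count_append, List.count_replicate,
      beq_iff_eq, ih (s+1)]
    by_cases h : s = v
    · subst h
      rw [if_pos rfl, if_neg (by omega), if_pos (by omega)]
      omega
    · rw [if_neg h]
      by_cases h2 : s + 1 ≤ v ∧ v < s + 1 + n
      · rw [if_pos h2, if_pos (by omega)]; omega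
      · rw [if_neg h2, if_neg (by omega)]

lemma length_blocks (g : ℕ → ℕ) : ∀ (n s : ℕ),
    (((List.range' s n).map (fun k => List.replicate (g k) k)).flatten).length
      = ∑ k ∈ Finset.Ico s (s + n), g k := by
  intro n
  induction n with
  | zero => intro s; simp
  | succ n ih =>
    intro s
    rw [List.range'_succ]
    simp only [List.map_cons, List.flatten_cons, List.length_append, List.length_replicate,
      ih (s+1)]
    rw [Finset.sum_eq_sum_Ico_succ_bot (show s < s + (n+1) by omega),
      show s + 1 + n = s + (n+1) from by omega]

lemma mem_blocks (g : ℕ → ℕ) {v : ℕ} {s n : ℕ}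
    (hv : v ∈ (((List.range' s n).map (fun k => List.replicate (g k) k)).flatten)) :
      s ≤ v ∧ v < s + n := by
  simp only [List.mem_flatten, List.mem_map] at hv
  obtain ⟨l, ⟨k, hk, rfl⟩, hvl⟩ := hv
  obtain rfl := List.eq_of_mem_replicate hvl
  rw [List.mem_range'_1] at hk
  exact hk

lemma pairwise_blocks (g : ℕ → ℕ) : ∀ (n s : ℕ),
    (((List.range' s n).map (fun k => List.replicate (g k) k)).flatten).Pairwise (· ≤ ·) := by
  intro n
  induction n with
  | zero => intro s; simp
  | succ n ih =>
    intro s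
    rw [List.range'_succ]
    simp only [List.map_cons, List.flatten_cons]
    rw [List.pairwise_append]
    refine ⟨List.pairwise_replicate.2 (by simp), ih (s+1), ?_⟩
    intro a ha b hb
    rw [List.eq_of_mem_replicate ha]
    have := mem_blocks g hb
    omega

/-! ## rowf lemmas -/

lemma count_tailf (r : ℕ) (f : ℕ → ℕ → ℕ) {i : ℕ} (hi : i < r) (v : ℕ) :
    (tailf r f i).count v = if i+2 ≤ v ∧ v ≤ r+1 then f i v else 0 := by
  unfold tailf
  rw [count_blocks]
  congr 1
  have : i + 2 + (r - i) = r + 2 := by omega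
  rw [this]
  simp only [eq_iff_iff]
  omega

lemma count_rowf (r : ℕ) (f : ℕ → ℕ → ℕ) {i : ℕ} (hi : i < r) (v : ℕ) :
    (rowf r f i).count v =
      if v = i+1 then lenf r f (i+1) + 1
      else if i+2 ≤ v ∧ v ≤ r+1 then f i v else 0 := by
  unfold rowf
  rw [List.count_append, List.count_replicate, count_tailf r f hi]
  simp only [beq_iff_eq]
  by_cases h : v = i + 1
  · rw [if_pos h.symm, if_pos h, if_neg (by omega)]
  · rw [if_neg (fun hh => h hh.symm), if_neg h, Nat.zero_add]

lemma length_rowf (r : ℕ) (f : ℕ → ℕ → ℕ) {i : ℕ} (hi : i < r) :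
    (rowf r f i).length = lenf r f i := by
  unfold rowf tailf
  rw [List.length_append, List.length_replicate, length_blocks,
    show i + 2 + (r - i) = r + 2 from by omega, lenf_succ r f hi]
  have : Sf r f i = ∑ k ∈ Finset.Ico (i+2) (r+2), f i k := by
    rw [show Finset.Ico (i+2) (r+2) = Finset.Icc (i+2) (r+1) from
      Finset.Ico_add_one_right_eq_Icc (a := i+2) (b := r+1)]; rfl
  omega

lemma mem_rowf (r : ℕ) (f : ℕ → ℕ → ℕ) {i : ℕ} (hi : i < r) {x : ℕ}
    (hx : x ∈ rowf r f i) : i + 1 ≤ x ∧ x ≤ r + 1 := by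
  unfold rowf at hx
  rcases List.mem_append.1 hx with h | h
  · rw [List.eq_of_mem_replicate h]; omega
  · have := mem_blocks _ h
    omega

lemma pairwise_rowf (r : ℕ) (f : ℕ → ℕ → ℕ) {i : ℕ} (hi : i < r) :
    (rowf r f i).Pairwise (· ≤ ·) := by
  unfold rowf
  rw [List.pairwise_append]
  refine ⟨List.pairwise_replicate.2 (by simp), pairwise_blocks _ _ _, ?_⟩
  intro a ha b hb
  rw [List.eq_of_mem_replicate ha]
  have := mem_blocks _ hb
  omega

lemma head_rowf (r : ℕ) (f : ℕ → ℕ → ℕ) (i : ℕ) :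
    (rowf r f i).head? = some (i+1) := by
  unfold rowf
  rw [List.head?_append_of_ne_nil]
  · rw [List.replicate_succ]; rfl
  · simp [List.replicate_succ]

lemma getD_rowf_left (r : ℕ) (f : ℕ → ℕ → ℕ) (i : ℕ) {j : ℕ}
    (hj : j < lenf r f (i+1) + 1) : (rowf r f i).getD j 0 = i + 1 := by
  unfold rowf
  rw [List.getD_eq_getElem _ _ (by
    rw [List.length_append, List.length_replicate]; omega)]
  rw [List.getElem_append_left (by rw [List.length_replicate]; omega)]
  exact List.getElem_replicate ..

/-! ## the constructed tableau -/

def fext (r : ℕ) (f : Fin r → ℕ → ℕ) : ℕ → ℕ → ℕ :=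
  fun i k => if h : i < r then f ⟨i, h⟩ k else 0

def mkT (r : ℕ) (f : Fin r → ℕ → ℕ) : TabA r where
  row i := rowf r (fext r f) i.1
  entry_mem i e he := by
    have := mem_rowf r _ i.2 he
    omega
  row_weak i := List.isChain_iff_pairwise.2 (pairwise_rowf r _ i.2)
  first_col i := head_rowf r _ i.1
  col_le i h := by
    rw [length_rowf r _ h, length_rowf r _ i.2, lenf_succ r _ i.2]
    omega
  col_strict i h j hj := by
    show (rowf r (fext r f) i.1).getD j 0 < (rowf r (fext r f) (i.1+1)).getD j 0
    have hj' : j < (rowf r (fext r f) (i.1+1)).length := hj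
    rw [length_rowf r _ h] at hj'
    rw [getD_rowf_left r _ i.1 (by omega)]
    have hmem : (rowf r (fext r f) (i.1+1)).getD j 0 ∈ rowf r (fext r f) (i.1+1) := by
      rw [List.getD_eq_getElem _ _ hj]
      exact List.getElem_mem _
    have := mem_rowf r _ h hmem
    omega
  marg_large i := by
    rw [count_rowf r _ i.2, if_pos rfl]
    congr 1
    by_cases h : i.1 + 1 < r
    · rw [dif_pos h, length_rowf r _ h]
    · rw [dif_neg h, lenf_of_ge r _ (by omega)]

lemma ellA_mkT (r : ℕ) (f : Fin r → ℕ → ℕ) (i : Fin r) {k : ℕ}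
    (hk : i.1 + 2 ≤ k ∧ k ≤ r + 1) : ellA r (mkT r f) i k = f i k := by
  show (rowf r (fext r f) i.1).count k = f i k
  rw [count_rowf r _ i.2, if_neg (by omega), if_pos hk]
  unfold fext
  rw [dif_pos i.2]


/-! ## reconstruction -/

variable {r : ℕ}

lemma mem_row_T (T : TabA r) (i : Fin r) {x : ℕ} (hx : x ∈ T.row i) :
    i.1 + 1 ≤ x ∧ x ≤ r + 1 := by
  refine ⟨?_, (T.entry_mem i x hx).2⟩
  have hp := List.isChain_iff_pairwise.1 (T.row_weak i)
  have hh := T.first_col i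
  cases hrow : T.row i with
  | nil => rw [hrow] at hh; simp at hh
  | cons a t =>
    rw [hrow] at hh hp hx
    simp only [List.head?_cons, Option.some.injEq] at hh
    subst hh
    rcases List.mem_cons.1 hx with rfl | hx
    · exact le_refl _
    · exact (List.pairwise_cons.1 hp).1 x hx

/-- the grid of multiplicities extracted from `T` -/
def Fg (T : TabA r) : ℕ → ℕ → ℕ := fext r (fun i k => ellA r T i k)

lemma Fg_eq (T : TabA r) (i : Fin r) (k : ℕ) : Fg T i.1 k = ellA r T i k := by
  unfold Fg fext
  rw [dif_pos i.2]

lemma length_sum_T (T : TabA r) (i : Fin r) :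
    (T.row i).length = ∑ v ∈ Finset.Icc (i.1+1) (r+1), (T.row i).count v := by
  have h := Multiset.sum_count_eq_card (s := Finset.Icc (i.1+1) (r+1))
    (m := (T.row i : Multiset ℕ)) (by
      intro a ha
      have := mem_row_T T i (by exact_mod_cast ha)
      rw [Finset.mem_Icc]; omega)
  simp only [Multiset.coe_count] at h
  rw [h]
  simp

lemma length_row_T (T : TabA r) : ∀ m : ℕ, ∀ i : Fin r, r - i.1 ≤ m →
    (T.row i).length = lenf r (Fg T) i.1 := by
  intro m
  induction m with
  | zero => intro i h; omega
  | succ m ih =>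
    intro i h
    rw [length_sum_T T i, lenf_succ r _ i.2]
    have hIcc : Finset.Icc (i.1+1) (r+1) = Finset.Ico (i.1+1) (r+2) := by
      rw [show Finset.Ico (i.1+1) (r+2) = Finset.Icc (i.1+1) (r+1) from
        Finset.Ico_add_one_right_eq_Icc (a := i.1+1) (b := r+1)]
    rw [hIcc, Finset.sum_eq_sum_Ico_succ_bot (by omega)]
    have hml := T.marg_large i
    have hc : (T.row i).count (i.1+1) = lenf r (Fg T) (i.1+1) + 1 := by
      rw [hml]
      by_cases hlt : i.1 + 1 < r
      · rw [dif_pos hlt, ih ⟨i.1+1, hlt⟩ (show r - (i.1+1) ≤ m by omega)]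
      · rw [dif_neg hlt, lenf_of_ge r _ (by omega)]
    have hIcc2 : Finset.Ico (i.1+1+1) (r+2) = Finset.Icc (i.1+2) (r+1) := by
      ext x; simp only [Finset.mem_Ico, Finset.mem_Icc]; omega
    have hS : ∑ v ∈ Finset.Ico (i.1+1+1) (r+2), (T.row i).count v = Sf r (Fg T) i.1 := by
      rw [hIcc2]
      unfold Sf
      apply Finset.sum_congr rfl
      intro k hk
      rw [Fg_eq T i k]
      rfl
    rw [hc, hS]
    omega

lemma row_eq_T (T : TabA r) (i : Fin r) : T.row i = rowf r (Fg T) i.1 := by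
  refine (fun hp h1 h2 => List.Perm.eq_of_pairwise' (r := (· ≤ ·)) h1 h2 hp) ?_ ?_ ?_
  · rw [List.perm_iff_count]
    intro v
    rw [count_rowf r _ i.2 v]
    by_cases h1 : v = i.1 + 1
    · rw [if_pos h1, h1]
      have hml := T.marg_large i
      rw [hml]
      by_cases hlt : i.1 + 1 < r
      · rw [dif_pos hlt, length_row_T T (r - (i.1+1)) ⟨i.1+1, hlt⟩ (le_refl _)]
      · rw [dif_neg hlt, lenf_of_ge r _ (by omega)]
    · rw [if_neg h1]
      by_cases h2 : i.1 + 2 ≤ v ∧ v ≤ r + 1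
      · rw [if_pos h2, Fg_eq T i v]; rfl
      · rw [if_neg h2, List.count_eq_zero]
        intro hv
        have := mem_row_T T i hv
        omega
  · exact List.isChain_iff_pairwise.1 (T.row_weak i)
  · exact pairwise_rowf r _ i.2

lemma TabA_ext {T T' : TabA r} (h : T.row = T'.row) : T = T' := by
  cases T; cases T'; simp_all

lemma T_eq_mkT (T : TabA r) : T = mkT r (fun i k => ellA r T i k) := by
  apply TabA_ext
  funext i
  exact row_eq_T T i


/-! ## roots -/

lemma betaA_le {r a b a' b' : ℕ} (ha : 1 ≤ a) (hab : a ≤ b) (hb : b ≤ r)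
    (h : betaA r a b = betaA r a' b') : a' ≤ a ∧ a ≤ b' ∧ a' ≤ b ∧ b ≤ b' := by
  have e1 : (if a ≤ (a-1)+1 ∧ (a-1)+1 ≤ b then (1:ℕ) else 0)
      = (if a' ≤ (a-1)+1 ∧ (a-1)+1 ≤ b' then 1 else 0) := congrFun h ⟨a-1, by omega⟩
  have e2 : (if a ≤ (b-1)+1 ∧ (b-1)+1 ≤ b then (1:ℕ) else 0)
      = (if a' ≤ (b-1)+1 ∧ (b-1)+1 ≤ b' then 1 else 0) := congrFun h ⟨b-1, by omega⟩
  split_ifs at e1 e2 <;> omega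

lemma betaA_inj {r a b a' b' : ℕ} (ha : 1 ≤ a) (hab : a ≤ b) (hb : b ≤ r)
    (ha' : 1 ≤ a') (hab' : a' ≤ b') (hb' : b' ≤ r)
    (h : betaA r a b = betaA r a' b') : a = a' ∧ b = b' := by
  have h1 := betaA_le ha hab hb h
  have h2 := betaA_le ha' hab' hb' h.symm
  omega

lemma betaA_mem {r a b : ℕ} (ha : 1 ≤ a) (hab : a ≤ b) (hb : b ≤ r) :
    betaA r a b ∈ posRootsA r := by
  unfold posRootsA
  refine Finset.mem_image.2 ⟨(a, b), ?_, rfl⟩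
  simp only [Finset.mem_filter, Finset.mem_product, Finset.mem_Icc]
  omega

lemma sum_posRoots {M : Type} [AddCommMonoid M] (r : ℕ) (g : (Fin r → ℕ) → M) :
    ∑ v ∈ posRootsA r, g v
      = ∑ i : Fin r, ∑ k ∈ Finset.Icc (i.1+1) r, g (betaA r (i.1+1) k) := by
  unfold posRootsA
  rw [Finset.sum_image (by
    intro x hx y hy hxy
    simp only [Finset.coe_filter, Set.mem_setOf_eq, Finset.mem_product, Finset.mem_Icc] at hx hy
    have := betaA_inj hx.1.1.1 hx.2 hx.1.2.2 hy.1.1.1 hy.2 hy.1.2.2 hxy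
    cases x; cases y; simp_all)]
  rw [Finset.sum_filter, Finset.sum_product]
  rw [show (∑ i : Fin r, ∑ k ∈ Finset.Icc (i.1+1) r, g (betaA r (i.1+1) k))
      = ∑ n ∈ Finset.range r, ∑ k ∈ Finset.Icc (n+1) r, g (betaA r (n+1) k) from
      Fin.sum_univ_eq_sum_range (fun n => ∑ k ∈ Finset.Icc (n+1) r, g (betaA r (n+1) k)) r]
  apply Finset.sum_nbij' (i := fun a => a - 1) (j := fun n => n + 1)
  · intro a ha; simp only [Finset.mem_Icc] at ha; simp only [Finset.mem_range]; omega
  · intro n hn; simp only [Finset.mem_range] at hn; simp only [Finset.mem_Icc]; omega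
  · intro a ha; simp only [Finset.mem_Icc] at ha; omega
  · intro n _; omega
  · intro a ha
    simp only [Finset.mem_Icc] at ha
    rw [show a - 1 + 1 = a from by omega, ← Finset.sum_filter]
    apply Finset.sum_congr
    · ext x; simp only [Finset.mem_filter, Finset.mem_Icc]; omega
    · intros; rfl

lemma XiA_eval (r : ℕ) (T : TabA r) (i : Fin r) {k : ℕ} (hk1 : i.1+1 ≤ k) (hk2 : k ≤ r) :
    XiA r T (betaA r (i.1+1) k) = ellA r T i (k+1) := by
  unfold XiA
  rw [Fintype.sum_eq_single i (by
    intro x hx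
    apply Finset.sum_eq_zero
    intro k' hk'
    rw [if_neg]
    intro hEq
    simp only [Finset.mem_Icc] at hk'
    have := betaA_inj (by omega) hk1 hk2 (by omega) hk'.1 hk'.2 hEq
    exact hx (Fin.ext (by omega)))]
  rw [Finset.sum_eq_single_of_mem k (Finset.mem_Icc.2 ⟨hk1, hk2⟩) (by
    intro k' hk' hne
    rw [if_neg]
    intro hEq
    simp only [Finset.mem_Icc] at hk'
    have := betaA_inj (by omega) hk1 hk2 (by omega) hk'.1 hk'.2 hEq
    exact hne (by omega))]
  rw [if_pos rfl]

lemma sum_shift {M : Type} [AddCommMonoid M] (a b : ℕ) (h : ℕ → M) :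
    ∑ k ∈ Finset.Icc (a+2) (b+1), h k = ∑ k ∈ Finset.Icc (a+1) b, h (k+1) := by
  rw [show a+2 = a+1+1 from by omega, ← Finset.map_add_right_Icc (a+1) b 1, Finset.sum_map]
  rfl

/-! ## the correspondence -/

def cext (r : ℕ) (c : {v // v ∈ posRootsA r} → ℕ) : (Fin r → ℕ) → ℕ :=
  fun v => if h : v ∈ posRootsA r then c ⟨v, h⟩ else 0

lemma cext_eq (r : ℕ) (c : {v // v ∈ posRootsA r} → ℕ) (α : {v // v ∈ posRootsA r}) :
    cext r c α.1 = c α := by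
  unfold cext
  rw [dif_pos α.2]

lemma sum_cA {M : Type} [AddCommMonoid M] (r : ℕ) (c : {v // v ∈ posRootsA r} → ℕ)
    (g : (Fin r → ℕ) → ℕ → M) :
    ∑ α : {v // v ∈ posRootsA r}, g α.1 (c α)
      = ∑ v ∈ posRootsA r, g v (cext r c v) := by
  rw [Finset.univ_eq_attach, ← Finset.sum_attach (posRootsA r) (fun v => g v (cext r c v))]
  apply Finset.sum_congr rfl
  intro α _
  rw [cext_eq]

def fof (r : ℕ) (c : {v // v ∈ posRootsA r} → ℕ) : Fin r → ℕ → ℕ :=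
  fun i k => cext r c (betaA r (i.1+1) (k-1))

def Tof (r : ℕ) (c : {v // v ∈ posRootsA r} → ℕ) : TabA r := mkT r (fof r c)

lemma ellA_Tof (r : ℕ) (c : {v // v ∈ posRootsA r} → ℕ) (i : Fin r) {k : ℕ}
    (hk : i.1 + 2 ≤ k ∧ k ≤ r + 1) :
    ellA r (Tof r c) i k = cext r c (betaA r (i.1+1) (k-1)) :=
  ellA_mkT r (fof r c) i hk

lemma negwt_Tof (r : ℕ) (c : {v // v ∈ posRootsA r} → ℕ) :
    negwtA r (Tof r c) = ∑ α : {v // v ∈ posRootsA r}, c α • α.1 := by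
  rw [sum_cA r c (fun v n => n • v), sum_posRoots r (fun v => cext r c v • v)]
  unfold negwtA
  apply Finset.sum_congr rfl
  intro i _
  have h1 : ∑ k ∈ Finset.Icc (i.1+2) (r+1), ellA r (Tof r c) i k • betaA r (i.1+1) (k-1)
      = ∑ k ∈ Finset.Icc (i.1+2) (r+1),
          cext r c (betaA r (i.1+1) (k-1)) • betaA r (i.1+1) (k-1) := by
    apply Finset.sum_congr rfl
    intro k hk
    simp only [Finset.mem_Icc] at hk
    rw [ellA_Tof r c i ⟨hk.1, hk.2⟩]
  rw [h1, sum_shift i.1 r (fun k => cext r c (betaA r (i.1+1) (k-1)) • betaA r (i.1+1) (k-1))]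
  apply Finset.sum_congr rfl
  intro k _
  rw [show k + 1 - 1 = k from by omega]

lemma size_Tof (r : ℕ) (c : {v // v ∈ posRootsA r} → ℕ) :
    sizeA r (Tof r c) = ∑ α : {v // v ∈ posRootsA r}, c α := by
  rw [show (∑ α : {v // v ∈ posRootsA r}, c α)
      = ∑ α : {v // v ∈ posRootsA r}, (fun (_ : Fin r → ℕ) (n : ℕ) => n) α.1 (c α) from rfl,
    sum_cA r c (fun _ n => n), sum_posRoots r (fun v => cext r c v)]
  unfold sizeA
  apply Finset.sum_congr rfl
  intro i _
  have h1 : ∑ k ∈ Finset.Icc (i.1+2) (r+1), ellA r (Tof r c) i k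
      = ∑ k ∈ Finset.Icc (i.1+2) (r+1), cext r c (betaA r (i.1+1) (k-1)) := by
    apply Finset.sum_congr rfl
    intro k hk
    simp only [Finset.mem_Icc] at hk
    rw [ellA_Tof r c i ⟨hk.1, hk.2⟩]
  rw [h1, sum_shift i.1 r (fun k => cext r c (betaA r (i.1+1) (k-1)))]
  apply Finset.sum_congr rfl
  intro k _
  rw [show k + 1 - 1 = k from by omega]

lemma roundtripA (r : ℕ) (c : {v // v ∈ posRootsA r} → ℕ) (α : {v // v ∈ posRootsA r}) :
    XiA r (Tof r c) α.1 = c α := by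
  obtain ⟨v, hv⟩ := α
  obtain ⟨⟨a, b⟩, hmem, heq⟩ := Finset.mem_image.1 hv
  simp only [Finset.mem_filter, Finset.mem_product, Finset.mem_Icc] at hmem
  obtain ⟨⟨⟨ha1, har⟩, ⟨hb1, hbr⟩⟩, hab⟩ := hmem
  obtain ⟨n, rfl⟩ : ∃ n, a = n + 1 := ⟨a - 1, by omega⟩
  have hn : n < r := by omega
  subst heq
  show XiA r (Tof r c) (betaA r ((⟨n, hn⟩ : Fin r).1 + 1) b) = _
  rw [XiA_eval r _ ⟨n, hn⟩ (by simp only [Fin.val_mk]; omega) (by omega)]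
  show ellA r (mkT r (fof r c)) ⟨n, hn⟩ (b+1) = _
  rw [ellA_mkT r _ ⟨n, hn⟩ (by simp only [Fin.val_mk]; omega)]
  show cext r c (betaA r (n+1) (b+1-1)) = _
  rw [show b + 1 - 1 = b from by omega]
  exact cext_eq r c ⟨betaA r (n+1) b, hv⟩

lemma rowf_congr {r : ℕ} {F F' : ℕ → ℕ → ℕ}
    (hFF : ∀ j k, j < r → j+2 ≤ k → k ≤ r+1 → F j k = F' j k) {i : ℕ} (hi : i < r) :
    rowf r F i = rowf r F' i := by
  have hS : ∀ j, j < r → Sf r F j = Sf r F' j := by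
    intro j hj
    apply Finset.sum_congr rfl
    intro k hk
    simp only [Finset.mem_Icc] at hk
    exact hFF j k hj hk.1 hk.2
  have hlen : ∀ m, lenf r F m = lenf r F' m := by
    intro m
    apply Finset.sum_congr rfl
    intro j hj
    simp only [Finset.mem_Ico] at hj
    rw [hS j hj.2]
  unfold rowf tailf
  rw [hlen]
  congr 1
  congr 1
  apply List.map_congr_left
  intro k hk
  rw [List.mem_range'_1] at hk
  rw [hFF i k hi hk.1 (by omega)]

lemma roundtripB (r : ℕ) (T : TabA r) :
    Tof r (fun α => XiA r T α.1) = T := by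
  apply TabA_ext
  funext i
  show rowf r (fext r (fof r (fun α => XiA r T α.1))) i.1 = T.row i
  rw [row_eq_T T i]
  apply rowf_congr (hi := i.2)
  intro j k hj hk1 hk2
  unfold fof Fg
  unfold fext
  rw [dif_pos hj, dif_pos hj]
  show cext r (fun α => XiA r T α.1) (betaA r (j+1) (k-1)) = ellA r T ⟨j, hj⟩ k
  rw [show (j : ℕ) + 1 = (⟨j, hj⟩ : Fin r).1 + 1 from rfl,
    cext_eq r _ ⟨betaA r ((⟨j, hj⟩ : Fin r).1+1) (k-1),
      betaA_mem (by omega) (by simp only [Fin.val_mk]; omega) (by omega)⟩]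
  show XiA r T (betaA r ((⟨j, hj⟩ : Fin r).1+1) (k-1)) = _
  rw [XiA_eval r T ⟨j, hj⟩ (by simp only [Fin.val_mk]; omega) (by omega)]
  rw [show k - 1 + 1 = k from by omega]

end S11

/-- for every `μ` in the positive root lattice of `A_r`,
Lusztig's `q`-analogue of the Kostant partition function satisfies
`𝒫(μ;q) = Σ_{T ∈ 𝒯(∞), -wt(T) = μ} q^{|T|}`, stated coefficientwise in `q`:
for each `d`, the number of Kostant partitions `c` of `μ` with `Σ_α c(α) = d`
equals the number of `T ∈ 𝒯(∞)` with `-wt(T) = μ` and `|T| = d`. -/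
theorem stmt11 (r : ℕ) (hr : 1 ≤ r) :
    ∀ μ : Fin r → ℕ, ∀ d : ℕ,
      Nat.card {c : {v // v ∈ posRootsA r} → ℕ //
          (∑ α : {v // v ∈ posRootsA r}, c α • α.1) = μ ∧
          (∑ α : {v // v ∈ posRootsA r}, c α) = d}
      = Nat.card {T : TabA r // negwtA r T = μ ∧ sizeA r T = d} := by
  intro μ d
  apply Nat.card_congr
  refine ⟨fun c => ⟨S11.Tof r c.1, ?_, ?_⟩, fun T => ⟨fun α => XiA r T.1 α.1, ?_, ?_⟩, ?_, ?_⟩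
  · rw [S11.negwt_Tof r c.1]; exact c.2.1
  · rw [S11.size_Tof r c.1]; exact c.2.2
  · rw [← S11.negwt_Tof r _, S11.roundtripB r T.1]; exact T.2.1
  · rw [← S11.size_Tof r _, S11.roundtripB r T.1]; exact T.2.2
  · intro c
    apply Subtype.ext
    funext α
    exact S11.roundtripA r c.1 α
  · intro T
    apply Subtype.ext
    exact S11.roundtripB r T.1
end
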